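/- arXiv:2307.03587 — 2 statements merged into one kernel-verified Lean document; each statement's English description precedes it below -/
import Mathlib

section
/- det(Σ̄_0)/det(Σ̄_t) ≤ ( 1 + trace(Σ̄_0)·L²·(Σ_{i=1}^t w_i^p)/(d σ²) )^d, where Σ̄_t := (Σ̄_t^{-1})^{-1}. -/
open Matrix Finset

variable {n : Type*} [Fintype n] [DecidableEq n]

lemma myDiagNonneg {A : Matrix n n ℝ} (hA : A.PosSemidef) (i : n) : 0 ≤ A i i := by
  simpa [mulVec_single, single_dotProduct] using hA.dotProduct_mulVec_nonneg (Pi.single i 1)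

lemma myEntrySq {A : Matrix n n ℝ} (hA : A.PosSemidef) (i j : n) :
    A i j ^ 2 ≤ A i i * A j j := by
  by_cases hij : i = j
  · subst hij; nlinarith [myDiagNonneg hA i]
  have hsym : A j i = A i j := by
    have := hA.1.apply i j
    simpa using this
  have key : ∀ s : ℝ, 0 ≤ A i i * (s * s) + (2 * A i j) * s + A j j := by
    intro s
    have h := hA.dotProduct_mulVec_nonneg (s • (Pi.single i 1 : n → ℝ) + Pi.single j 1)
    simp only [star_trivial, mulVec_add, mulVec_smul, dotProduct_add, add_dotProduct,
      dotProduct_smul, smul_dotProduct, single_dotProduct, mulVec_single, smul_eq_mul,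
      Pi.add_apply, Pi.smul_apply, Pi.single_apply, mul_one, op_smul_eq_mul, Matrix.col_apply,
      one_mul] at h
    rw [hsym] at h
    ring_nf at h ⊢
    linarith
  have := discrim_le_zero key
  rw [discrim] at this
  nlinarith

lemma myTraceMul {A B : Matrix n n ℝ} (hA : A.PosSemidef) (hB : B.PosSemidef) :
    (A * B).trace ≤ A.trace * B.trace := by
  have hAd := myDiagNonneg hA
  have hBd := myDiagNonneg hB
  have e : (A * B).trace = ∑ i, ∑ j, A i j * B j i := by
    simp [Matrix.trace, Matrix.diag, Matrix.mul_apply]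
  have hAsum : (0:ℝ) ≤ ∑ i, A i i := Finset.sum_nonneg fun i _ => hAd i
  have hBsum : (0:ℝ) ≤ ∑ i, B i i := Finset.sum_nonneg fun i _ => hBd i
  rw [e]
  have step1 : ∑ i, ∑ j, A i j * B j i ≤ ∑ i, ∑ j,
      (Real.sqrt (A i i) * Real.sqrt (B i i)) * (Real.sqrt (A j j) * Real.sqrt (B j j)) := by
    apply Finset.sum_le_sum; intro i _; apply Finset.sum_le_sum; intro j _
    have h1 : |A i j| ≤ Real.sqrt (A i i * A j j) := Real.abs_le_sqrt (myEntrySq hA i j)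
    have h2 : |B j i| ≤ Real.sqrt (B j j * B i i) := Real.abs_le_sqrt (myEntrySq hB j i)
    calc A i j * B j i ≤ |A i j| * |B j i| := by rw [← abs_mul]; exact le_abs_self _
      _ ≤ Real.sqrt (A i i * A j j) * Real.sqrt (B j j * B i i) :=
          mul_le_mul h1 h2 (abs_nonneg _) (Real.sqrt_nonneg _)
      _ = _ := by rw [Real.sqrt_mul (hAd i), Real.sqrt_mul (hBd j)]; ring
  refine step1.trans ?_
  rw [← Finset.sum_mul_sum]
  have cs := Real.sum_sqrt_mul_sqrt_le (f := fun i => A i i) (g := fun i => B i i)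
    Finset.univ hAd hBd
  have hf0 : (0:ℝ) ≤ ∑ i, Real.sqrt (A i i) * Real.sqrt (B i i) :=
    Finset.sum_nonneg fun i _ => by positivity
  calc (∑ i, Real.sqrt (A i i) * Real.sqrt (B i i)) *
        (∑ j, Real.sqrt (A j j) * Real.sqrt (B j j))
      ≤ (Real.sqrt (∑ i, A i i) * Real.sqrt (∑ i, B i i)) *
        (Real.sqrt (∑ i, A i i) * Real.sqrt (∑ i, B i i)) :=
        mul_le_mul cs cs hf0 (by positivity)
    _ = (Real.sqrt (∑ i, A i i) * Real.sqrt (∑ i, A i i)) *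
        (Real.sqrt (∑ i, B i i) * Real.sqrt (∑ i, B i i)) := by ring
    _ = (∑ i, A i i) * (∑ i, B i i) := by
        rw [Real.mul_self_sqrt hAsum, Real.mul_self_sqrt hBsum]
    _ = A.trace * B.trace := by simp [Matrix.trace, Matrix.diag]

lemma myTraceEig {A : Matrix n n ℝ} (hA : A.IsHermitian) :
    A.trace = ∑ i, hA.eigenvalues i := by
  simpa using hA.trace_eq_sum_eigenvalues

lemma myDetLe [Nonempty n] {A : Matrix n n ℝ} (hA : A.PosSemidef) :
    A.det ≤ (A.trace / Fintype.card n) ^ Fintype.card n := by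
  set c := Fintype.card n with hc
  have hc0 : 0 < c := Fintype.card_pos
  have hz : ∀ i, 0 ≤ hA.1.eigenvalues i := hA.eigenvalues_nonneg
  have hdet : A.det = ∏ i, hA.1.eigenvalues i := by
    simpa using hA.1.det_eq_prod_eigenvalues
  have amgm := Real.geom_mean_le_arith_mean_weighted Finset.univ
    (fun _ => (c : ℝ)⁻¹) hA.1.eigenvalues (fun _ _ => by positivity)
    (by simp [Finset.card_univ, ← hc, mul_comm])
    (fun i _ => hz i)
  rw [Real.finset_prod_rpow _ _ (fun i _ => hz i)] at amgm
  have hT : ∑ i, (c : ℝ)⁻¹ * hA.1.eigenvalues i = A.trace / c := by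
    rw [← Finset.mul_sum, myTraceEig hA.1, div_eq_inv_mul]
  rw [hT] at amgm
  have hprod : (0:ℝ) ≤ ∏ i, hA.1.eigenvalues i :=
    Finset.prod_nonneg fun i _ => hz i
  have key : ∏ i, hA.1.eigenvalues i ≤ (A.trace / c) ^ c := by
    have h2 := pow_le_pow_left₀ (Real.rpow_nonneg hprod _) amgm c
    rwa [← Real.rpow_natCast ((∏ i, hA.1.eigenvalues i) ^ ((c:ℝ)⁻¹)) c,
      ← Real.rpow_mul hprod, inv_mul_cancel₀ (by positivity : (c:ℝ) ≠ 0),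
      Real.rpow_one] at h2
  rw [hdet]; exact key

lemma mySmulPsd {c : ℝ} (hc : 0 ≤ c) {A : Matrix n n ℝ} (hA : A.PosSemidef) :
    (c • A).PosSemidef := by
  refine PosSemidef.of_dotProduct_mulVec_nonneg ?_ (fun v => ?_)
  · ext i j
    simp only [Matrix.conjTranspose_apply, Matrix.smul_apply, star_trivial, smul_eq_mul]
    rw [show A j i = A i j by simpa using hA.1.apply i j]
  · have := hA.dotProduct_mulVec_nonneg v
    simp only [Matrix.smul_mulVec, dotProduct_smul, smul_eq_mul]
    positivity

lemma myVecMulVecPsd (x : n → ℝ) : (vecMulVec x x).PosSemidef := by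
  refine PosSemidef.of_dotProduct_mulVec_nonneg ?_ (fun v => ?_)
  · ext i j
    simp [Matrix.conjTranspose_apply, vecMulVec_apply, mul_comm]
  · have hmv : vecMulVec x x *ᵥ v = (x ⬝ᵥ v) • x := by
      ext i
      simp only [Matrix.mulVec, vecMulVec_apply, dotProduct, Pi.smul_apply, smul_eq_mul,
        Finset.sum_mul]
      exact Finset.sum_congr rfl fun k _ => by ring
    rw [hmv]
    simp only [star_trivial, dotProduct_smul, smul_eq_mul]
    rw [dotProduct_comm]
    exact mul_self_nonneg _

set_option maxHeartbeats 1000000 in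
theorem stmt5 (d t p : ℕ) (hd : 1 ≤ d) (ht : 1 ≤ t) (hp : 1 ≤ p)
    (σ L : ℝ) (hσ : 0 < σ) (hL : 0 ≤ L)
    (x : ℕ → Fin d → ℝ) (hx : ∀ i ∈ Finset.Icc 1 t, Real.sqrt (x i ⬝ᵥ x i) ≤ L)
    (w : ℕ → ℝ) (hw : ∀ i ∈ Finset.Icc 1 t, 0 < w i)
    (S0 : Matrix (Fin d) (Fin d) ℝ) (hS0 : S0.PosDef) :
    S0.det /
        ((S0⁻¹ + (σ ^ 2)⁻¹ • ∑ i ∈ Finset.Icc 1 t, w i ^ p • vecMulVec (x i) (x i))⁻¹).det ≤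
      (1 + S0.trace * L ^ 2 * (∑ i ∈ Finset.Icc 1 t, w i ^ p) / (d * σ ^ 2)) ^ d := by
  haveI : Nonempty (Fin d) := ⟨⟨0, hd⟩⟩
  have hσ2 : (0:ℝ) < σ ^ 2 := by positivity
  set M : Matrix (Fin d) (Fin d) ℝ :=
    (σ ^ 2)⁻¹ • ∑ i ∈ Finset.Icc 1 t, w i ^ p • vecMulVec (x i) (x i) with hMdef
  have hM : M.PosSemidef := by
    apply mySmulPsd (by positivity)
    apply Finset.sum_induction _ (fun m : Matrix (Fin d) (Fin d) ℝ => m.PosSemidef)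
      (fun a b ha hb => ha.add hb) Matrix.PosSemidef.zero
    intro i hi
    exact mySmulPsd (le_of_lt (pow_pos (hw i hi) p)) (myVecMulVecPsd (x i))
  set A : Matrix (Fin d) (Fin d) ℝ := S0⁻¹ + M with hAdef
  have hApd : A.PosDef := (hS0.inv).add_posSemidef hM
  have hAdet : 0 < A.det := hApd.det_pos
  have hLHS : S0.det / (A⁻¹).det = S0.det * A.det := by
    rw [Matrix.det_nonsing_inv, Ring.inverse_eq_inv', div_eq_mul_inv, inv_inv]
  rw [hLHS]
  -- the conjugated matrix
  open MatrixOrder in set R : Matrix (Fin d) (Fin d) ℝ := CFC.sqrt S0 with hRdef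
  have hRh : Rᴴ = R := by open MatrixOrder in exact (CFC.sqrt_nonneg S0).posSemidef.1
  set B : Matrix (Fin d) (Fin d) ℝ := R * A * R with hBdef
  have hBpsd : B.PosSemidef := by
    have := hApd.posSemidef.conjTranspose_mul_mul_same R
    rwa [hRh] at this
  have hRR : R * R = S0 := by open MatrixOrder in exact CFC.sqrt_mul_sqrt_self S0 hS0.posSemidef.nonneg
  have hdetB : B.det = S0.det * A.det := by
    rw [hBdef, Matrix.det_mul, Matrix.det_mul, ← hRR, Matrix.det_mul]; ring
  have hS0unit : IsUnit S0.det := isUnit_iff_ne_zero.mpr hS0.det_pos.ne'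
  have htraceB : B.trace = (d : ℝ) + (S0 * M).trace := by
    rw [hBdef, Matrix.trace_mul_cycle, hRR, hAdef, Matrix.mul_add,
      Matrix.mul_nonsing_inv S0 hS0unit, Matrix.trace_add, Matrix.trace_one, Fintype.card_fin]
  -- bound on trace M
  have hWsum : (0:ℝ) ≤ ∑ i ∈ Finset.Icc 1 t, w i ^ p :=
    Finset.sum_nonneg fun i hi => le_of_lt (pow_pos (hw i hi) p)
  have htrM : M.trace ≤ (σ ^ 2)⁻¹ * (L ^ 2 * ∑ i ∈ Finset.Icc 1 t, w i ^ p) := by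
    rw [hMdef, Matrix.trace_smul, Matrix.trace_sum, smul_eq_mul]
    apply mul_le_mul_of_nonneg_left _ (by positivity)
    rw [Finset.mul_sum]
    apply Finset.sum_le_sum
    intro i hi
    rw [Matrix.trace_smul, smul_eq_mul]
    have htr : (vecMulVec (x i) (x i)).trace = x i ⬝ᵥ x i := by
      simp [Matrix.trace, Matrix.diag, vecMulVec_apply, dotProduct]
    rw [htr]
    have hdp : (0:ℝ) ≤ x i ⬝ᵥ x i := Finset.sum_nonneg fun k _ => mul_self_nonneg _
    have hxx : x i ⬝ᵥ x i ≤ L ^ 2 := by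
      have := pow_le_pow_left₀ (Real.sqrt_nonneg _) (hx i hi) 2
      rwa [Real.sq_sqrt hdp] at this
    calc w i ^ p * (x i ⬝ᵥ x i) ≤ w i ^ p * L ^ 2 :=
          mul_le_mul_of_nonneg_left hxx (le_of_lt (pow_pos (hw i hi) p))
      _ = L ^ 2 * w i ^ p := by ring
  have htrS0 : (0:ℝ) ≤ S0.trace := by
    rw [Matrix.trace]
    exact Finset.sum_nonneg fun i _ => myDiagNonneg hS0.posSemidef i
  have htrSM : (S0 * M).trace ≤ S0.trace * ((σ ^ 2)⁻¹ * (L ^ 2 * ∑ i ∈ Finset.Icc 1 t, w i ^ p)) :=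
    (myTraceMul hS0.posSemidef hM).trans (mul_le_mul_of_nonneg_left htrM htrS0)
  -- combine
  have hd0 : (0:ℝ) < d := by exact_mod_cast hd
  have hbase : B.trace / d ≤ 1 + S0.trace * L ^ 2 * (∑ i ∈ Finset.Icc 1 t, w i ^ p) / (d * σ ^ 2) := by
    rw [div_le_iff₀ hd0, htraceB]
    have : (1 + S0.trace * L ^ 2 * (∑ i ∈ Finset.Icc 1 t, w i ^ p) / (d * σ ^ 2)) * d
        = d + S0.trace * ((σ ^ 2)⁻¹ * (L ^ 2 * ∑ i ∈ Finset.Icc 1 t, w i ^ p)) := by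
      field_simp
    rw [this]
    linarith [htrSM]
  have htrB0 : (0:ℝ) ≤ B.trace / d := by
    apply div_nonneg _ (le_of_lt hd0)
    rw [Matrix.trace]
    exact Finset.sum_nonneg fun i _ => myDiagNonneg hBpsd i
  calc S0.det * A.det = B.det := hdetB.symm
    _ ≤ (B.trace / d) ^ d := by
        have := myDetLe hBpsd
        simpa [Fintype.card_fin] using this
    _ ≤ (1 + S0.trace * L ^ 2 * (∑ i ∈ Finset.Icc 1 t, w i ^ p) / (d * σ ^ 2)) ^ d :=
        pow_le_pow_left₀ htrB0 hbase d
end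

section
/- Σ_t Σ̃_t^{-1} Σ_t ⪯ w_t Σ_t, where A ⪯ B means that B − A is positive semidefinite. -/
open Matrix Finset

/-- `Σ_t := (Σ_0⁻¹ + σ⁻² ∑ᵢ wᵢ xᵢxᵢᵀ)⁻¹` -/
noncomputable def SigM (d : ℕ) (σ : ℝ) (w : ℕ → ℝ) (x : ℕ → Fin d → ℝ)
    (S0 : Matrix (Fin d) (Fin d) ℝ) (t : ℕ) : Matrix (Fin d) (Fin d) ℝ :=
  (S0⁻¹ + (σ ^ 2)⁻¹ • ∑ i ∈ Finset.Icc 1 t, w i • vecMulVec (x i) (x i))⁻¹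

/-- `Σ̃_t := (w_t Σ_0⁻¹ + σ⁻² ∑ᵢ wᵢ² xᵢxᵢᵀ)⁻¹` -/
noncomputable def TilM (d : ℕ) (σ : ℝ) (w : ℕ → ℝ) (x : ℕ → Fin d → ℝ)
    (S0 : Matrix (Fin d) (Fin d) ℝ) (t : ℕ) : Matrix (Fin d) (Fin d) ℝ :=
  (w t • S0⁻¹ + (σ ^ 2)⁻¹ • ∑ i ∈ Finset.Icc 1 t, w i ^ 2 • vecMulVec (x i) (x i))⁻¹

lemma psd_outer {d : ℕ} (x : Fin d → ℝ) : (vecMulVec x x).PosSemidef := by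
  refine Matrix.PosSemidef.of_dotProduct_mulVec_nonneg ?_ ?_
  · ext i j
    simp [vecMulVec_apply, Matrix.conjTranspose_apply, mul_comm]
  · intro v
    have h : ∀ i, (vecMulVec x x *ᵥ v) i = x i * (x ⬝ᵥ v) := by
      intro i
      simp only [mulVec, dotProduct, vecMulVec_apply, Finset.mul_sum]
      exact Finset.sum_congr rfl fun j _ => by ring
    have : star v ⬝ᵥ (vecMulVec x x *ᵥ v) = (x ⬝ᵥ v) * (x ⬝ᵥ v) := by
      simp only [dotProduct, h, star_trivial]
      rw [Finset.sum_mul]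
      exact Finset.sum_congr rfl fun i _ => by ring
    rw [this]
    exact mul_self_nonneg _

lemma psd_smul {d : ℕ} {A : Matrix (Fin d) (Fin d) ℝ} (hA : A.PosSemidef) {c : ℝ}
    (hc : 0 ≤ c) : (c • A).PosSemidef := by
  refine Matrix.PosSemidef.of_dotProduct_mulVec_nonneg ?_ ?_
  · ext i j
    have := hA.1
    simp only [Matrix.conjTranspose_apply, Matrix.smul_apply, star_trivial, smul_eq_mul]
    rw [← hA.1.apply i j]
    simp
  · intro v
    rw [smul_mulVec, dotProduct_smul, smul_eq_mul]
    exact mul_nonneg hc (hA.dotProduct_mulVec_nonneg v)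

lemma pd_smul {d : ℕ} {A : Matrix (Fin d) (Fin d) ℝ} (hA : A.PosDef) {c : ℝ}
    (hc : 0 < c) : (c • A).PosDef := by
  refine Matrix.PosDef.of_dotProduct_mulVec_pos ?_ ?_
  · exact (psd_smul hA.posSemidef hc.le).1
  · intro v hv
    rw [smul_mulVec, dotProduct_smul, smul_eq_mul]
    exact mul_pos hc (hA.dotProduct_mulVec_pos hv)

lemma psd_sum {d : ℕ} {s : Finset ℕ} (F : ℕ → Matrix (Fin d) (Fin d) ℝ)
    (h : ∀ i ∈ s, (F i).PosSemidef) : (∑ i ∈ s, F i).PosSemidef := by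
  induction s using Finset.induction_on with
  | empty => simpa using Matrix.PosSemidef.zero
  | insert _ _ hns ih =>
    rw [Finset.sum_insert hns]
    exact (h _ (Finset.mem_insert_self _ _)).add
      (ih fun i hi => h i (Finset.mem_insert_of_mem hi))

theorem stmt6 (d t : ℕ) (hd : 1 ≤ d) (ht : 1 ≤ t) (σ : ℝ) (hσ : 0 < σ)
    (x : ℕ → Fin d → ℝ) (S0 : Matrix (Fin d) (Fin d) ℝ) (hS0 : S0.PosDef)
    (w : ℕ → ℝ) (hw1 : 0 < w 1) (hmono : ∀ i j, 1 ≤ i → i ≤ j → j ≤ t → w i ≤ w j) :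
    (w t • SigM d σ w x S0 t -
        SigM d σ w x S0 t * (TilM d σ w x S0 t)⁻¹ * SigM d σ w x S0 t).PosSemidef := by
  have hσ2 : (0:ℝ) < (σ ^ 2)⁻¹ := by positivity
  have hwt : 0 < w t := lt_of_lt_of_le hw1 (hmono 1 t le_rfl ht le_rfl)
  set V : ℕ → Matrix (Fin d) (Fin d) ℝ := fun i => vecMulVec (x i) (x i) with hV
  set A : Matrix (Fin d) (Fin d) ℝ :=
    S0⁻¹ + (σ ^ 2)⁻¹ • ∑ i ∈ Finset.Icc 1 t, w i • V i with hAdef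
  set C : Matrix (Fin d) (Fin d) ℝ :=
    w t • S0⁻¹ + (σ ^ 2)⁻¹ • ∑ i ∈ Finset.Icc 1 t, w i ^ 2 • V i with hCdef
  have hwi : ∀ i ∈ Finset.Icc 1 t, 0 < w i := fun i hi => by
    obtain ⟨h1, h2⟩ := Finset.mem_Icc.mp hi
    exact lt_of_lt_of_le hw1 (hmono 1 i le_rfl h1 h2)
  have hsumpsd : ∀ (c : ℕ → ℝ), (∀ i ∈ Finset.Icc 1 t, 0 ≤ c i) →
      ((σ ^ 2)⁻¹ • ∑ i ∈ Finset.Icc 1 t, c i • V i).PosSemidef := by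
    intro c hc
    exact psd_smul (psd_sum _ fun i hi => psd_smul (psd_outer (x i)) (hc i hi)) hσ2.le
  have hA : A.PosDef :=
    hS0.inv.add_posSemidef (hsumpsd w fun i hi => (hwi i hi).le)
  have hC : C.PosDef :=
    (pd_smul hS0.inv hwt).add_posSemidef (hsumpsd (fun i => w i ^ 2) fun i _ => sq_nonneg _)
  have hSig : SigM d σ w x S0 t = A⁻¹ := rfl
  have hTil : (TilM d σ w x S0 t)⁻¹ = C := by
    rw [TilM]
    exact Matrix.nonsing_inv_nonsing_inv _ (isUnit_iff_isUnit_det _ |>.mp hC.isUnit)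
  rw [hSig, hTil]
  have hinv : A⁻¹ * A = 1 := Matrix.nonsing_inv_mul _ (isUnit_iff_isUnit_det _ |>.mp hA.isUnit)
  have key : w t • A⁻¹ - A⁻¹ * C * A⁻¹ = A⁻¹ * (w t • A - C) * A⁻¹ := by
    rw [Matrix.mul_sub, Matrix.sub_mul, Matrix.mul_smul, Matrix.smul_mul, hinv,
      Matrix.one_mul]
  rw [key]
  have hdiff : w t • A - C =
      (σ ^ 2)⁻¹ • ∑ i ∈ Finset.Icc 1 t, (w t * w i - w i ^ 2) • V i := by
    rw [hAdef, hCdef, smul_add]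
    rw [add_sub_add_left_eq_sub, smul_comm (w t) ((σ ^ 2)⁻¹), ← smul_sub,
      Finset.smul_sum, ← Finset.sum_sub_distrib]
    congr 1
    refine Finset.sum_congr rfl fun i _ => ?_
    rw [smul_smul, ← sub_smul]
  have hpsd : (w t • A - C).PosSemidef := by
    rw [hdiff]
    refine hsumpsd _ fun i hi => ?_
    obtain ⟨h1, h2⟩ := Finset.mem_Icc.mp hi
    have := hmono i t h1 h2 le_rfl
    nlinarith [hwi i hi]
  have := hpsd.mul_mul_conjTranspose_same A⁻¹
  have hherm : (A⁻¹)ᴴ = A⁻¹ := hA.inv.isHermitian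
  rwa [hherm] at this
end
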